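/- Let (X,d) be a Polish metric space and a,b>0. For all finite nonnegative Borel measures μ₁,μ₂ on X, W₁^{a,b}(μ₁,μ₂) = inf over γ ∈ M^≤(μ₁,μ₂) of { a|μ₁−γ₁| + a|μ₂−γ₂| + b∫_{X×X} d(x,y) dγ(x,y) }, where γ₁,γ₂ are the marginals of γ and M^≤(μ₁,μ₂) = { γ ∈ M(X×X) : ∫_{X×X} d dγ < ∞ and γᵢ ≤ μᵢ for i=1,2 }. -/

import Mathlib

open MeasureTheory ENNReal

section GW

variable {X : Type*} [MeasurableSpace X] [MetricSpace X]

/-- A transference plan between two finite measures `μ` and `ν` of equal mass: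
a Borel probability measure `π` on `X × X` with `|μ| π(A × X) = μ A` and
`|ν| π(X × B) = ν B`. -/
def IsCoupling (μ ν : Measure X) (π : Measure (X × X)) : Prop :=
  IsProbabilityMeasure π ∧
  (∀ A : Set X, MeasurableSet A → μ Set.univ * π (A ×ˢ (Set.univ : Set X)) = μ A) ∧
  (∀ B : Set X, MeasurableSet B → ν Set.univ * π ((Set.univ : Set X) ×ˢ B) = ν B)

/-- The (mass-scaled) `p`-Wasserstein distance
`W_p(μ,ν) = (|μ| ⨅_π ∫ d(x,y)^p dπ)^{1/p}`, as an extended nonnegative real. -/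
noncomputable def WpE (p : ℝ) (μ ν : Measure X) : ℝ≥0∞ :=
  (μ Set.univ * ⨅ π : {π : Measure (X × X) // IsCoupling μ ν π},
      ∫⁻ z, edist z.1 z.2 ^ p ∂(π.1)) ^ (1 / p)

/-- `μ ∈ M_p(X)`: `μ` is a finite (nonnegative Borel) measure with finite `p`-moment. -/
def MemMp (p : ℝ) (μ : Measure X) : Prop :=
  IsFiniteMeasure μ ∧ ∀ x₀ : X, ∫⁻ x, edist x x₀ ^ p ∂μ ≠ ∞

/-- Total variation mass `|μ - ν|` of the difference of two (finite) measures,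
as an extended nonnegative real. -/
noncomputable def tvE (μ ν : Measure X) : ℝ≥0∞ := (μ - ν) Set.univ + (ν - μ) Set.univ

/-- Total variation mass `|μ - ν|` as a real number. -/
noncomputable def tv (μ ν : Measure X) : ℝ := (tvE μ ν).toReal

/-- The generalized Wasserstein distance
`W_p^{a,b}(μ,ν) = inf { a|μ-μ'| + a|ν-ν'| + b W_p(μ',ν') : μ',ν' ∈ M_p(X), |μ'|=|ν'| }`,
as an extended nonnegative real. -/
noncomputable def genWE (a b p : ℝ) (μ ν : Measure X) : ℝ≥0∞ :=
  ⨅ (μ' : Measure X) (ν' : Measure X) (_ : MemMp p μ') (_ : MemMp p ν')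
      (_ : μ' Set.univ = ν' Set.univ),
    ENNReal.ofReal a * tvE μ μ' + ENNReal.ofReal a * tvE ν ν' +
      ENNReal.ofReal b * WpE p μ' ν'

/-- The generalized Wasserstein distance `W_p^{a,b}` as a real number. -/
noncomputable def genW (a b p : ℝ) (μ ν : Measure X) : ℝ := (genWE a b p μ ν).toReal

/-- `I(φ) = inf_{s ≥ 0} (sφ + a|1-s|)`. -/
noncomputable def Idual (a φ : ℝ) : ℝ :=
  sInf {v : ℝ | ∃ s : ℝ, 0 ≤ s ∧ v = s * φ + a * |1 - s|}

end GW

section DomHelpers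

variable {α β : Type*} {mα : MeasurableSpace α} {mβ : MeasurableSpace β}

/-- Explicit formula for the subtraction of finite measures via Lebesgue decomposition. -/
lemma measure_sub_eq (μ ν : Measure α) [IsFiniteMeasure μ] [IsFiniteMeasure ν] :
    μ - ν = ν.withDensity (fun x => μ.rnDeriv ν x - 1) + μ.singularPart ν := by
  set f := μ.rnDeriv ν with hfdef
  have hf : Measurable f := Measure.measurable_rnDeriv μ ν
  set s := μ.singularPart ν with hsdef
  obtain ⟨T, hTm, hsT, hνTc⟩ := Measure.mutuallySingular_singularPart μ ν
  have hdec : ν.withDensity f + s = μ := Measure.rnDeriv_add_singularPart μ ν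
  refine le_antisymm ?_ ?_
  · apply Measure.sub_le_of_le_add
    calc μ = ν.withDensity f + s := hdec.symm
    _ ≤ ν.withDensity (fun x => (f x - 1) + 1) + s := by
        exact add_le_add_left (withDensity_mono (Filter.Eventually.of_forall fun x => le_tsub_add)) s
    _ = (ν.withDensity (fun x => f x - 1) + ν.withDensity (fun _ => 1)) + s := by
        rw [← withDensity_add_left (show Measurable (fun x => f x - 1) from hf.sub measurable_const)]; rfl
    _ = (ν.withDensity (fun x => f x - 1) + s) + ν := by
        rw [show (fun _ : α => (1:ℝ≥0∞)) = (1 : α → ℝ≥0∞) from rfl, withDensity_one]; abel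
  · rw [Measure.sub_def]
    refine le_sInf fun τ hτ => ?_
    rw [Set.mem_setOf_eq] at hτ
    rw [Measure.le_iff]
    intro A hA
    have hP : MeasurableSet {x | 1 < f x} := measurableSet_lt measurable_const hf
    set A₁ : Set α := (A ∩ {x | 1 < f x}) ∩ T with hA₁def
    set A₂ : Set α := A \ T with hA₂def
    have hA₁m : MeasurableSet A₁ := (hA.inter hP).inter hTm
    have hA₂m : MeasurableSet A₂ := hA.diff hTm
    have key1 : ∫⁻ x in A, (f x - 1) ∂ν = ∫⁻ x in A₁, (f x - 1) ∂ν := by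
      have hind : ∀ x, f x - 1 = Set.indicator {x | 1 < f x} (fun x => f x - 1) x := by
        intro x
        by_cases h : 1 < f x
        · exact (Set.indicator_of_mem (by exact h) (fun x => f x - 1)).symm
        · rw [Set.indicator_of_notMem (by exact h), tsub_eq_zero_of_le (not_lt.1 h)]
      calc ∫⁻ x in A, (f x - 1) ∂ν
          = ∫⁻ x in A, Set.indicator {x | 1 < f x} (fun x => f x - 1) x ∂ν := by
            exact lintegral_congr fun x => hind x
        _ = ∫⁻ x in {x | 1 < f x} ∩ A, (f x - 1) ∂ν := by
            rw [lintegral_indicator hP, Measure.restrict_restrict hP]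
        _ = ∫⁻ x in A₁, (f x - 1) ∂ν := by
            rw [Set.inter_comm, hA₁def]
            have h1 : ∫⁻ x in A ∩ {x | 1 < f x}, (f x - 1) ∂ν
                = ∫⁻ x in T, (fun x => f x - 1) x ∂(ν.restrict (A ∩ {x | 1 < f x}))
                  + ∫⁻ x in Tᶜ, (fun x => f x - 1) x ∂(ν.restrict (A ∩ {x | 1 < f x})) := by
              rw [lintegral_add_compl _ hTm]
            rw [h1, Measure.restrict_restrict hTm, Measure.restrict_restrict hTm.compl]
            have h0 : ν.restrict (Tᶜ ∩ (A ∩ {x | 1 < f x})) = 0 := by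
              rw [Measure.restrict_eq_zero]
              exact measure_mono_null Set.inter_subset_left hνTc
            rw [h0, lintegral_zero_measure, add_zero, Set.inter_comm]
    have key2 : ∫⁻ x in A₁, (f x - 1) ∂ν ≤ τ A₁ := by
      have hμA₁ : μ A₁ ≤ τ A₁ + ν A₁ := by
        have := hτ A₁; simpa using this
      have hint : ∫⁻ x in A₁, f x ∂ν = ∫⁻ x in A₁, (f x - 1) ∂ν + ν A₁ := by
        have hcg : ∫⁻ x in A₁, f x ∂ν = ∫⁻ x in A₁, ((f x - 1) + 1) ∂ν := by
          refine setLIntegral_congr_fun hA₁m (fun x hx => ?_)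
          have h1f : 1 ≤ f x := le_of_lt hx.1.2
          rw [tsub_add_cancel_of_le h1f]
        rw [hcg, lintegral_add_right _ measurable_const, setLIntegral_one]
      have hμge : ∫⁻ x in A₁, f x ∂ν ≤ μ A₁ := by
        conv_rhs => rw [← hdec]
        rw [Measure.add_apply, withDensity_apply _ hA₁m]
        exact le_self_add
      have : ∫⁻ x in A₁, (f x - 1) ∂ν + ν A₁ ≤ τ A₁ + ν A₁ := by
        rw [← hint]; exact hμge.trans hμA₁
      exact ENNReal.le_of_add_le_add_right (measure_ne_top ν A₁) this
    have key3 : s A ≤ τ A₂ := by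
      have hsA : s A₂ = s A := measure_diff_null hsT
      have hνA₂ : ν A₂ = 0 := measure_mono_null (Set.diff_subset_iff.2 (by simp)) hνTc
      have hsle : s A₂ ≤ μ A₂ := by
        rw [← hdec]
        exact (Measure.le_add_left le_rfl) A₂
      have := hτ A₂
      rw [Measure.add_apply, hνA₂, add_zero] at this
      calc s A = s A₂ := hsA.symm
      _ ≤ μ A₂ := hsle
      _ ≤ τ A₂ := this
    have hdisj : Disjoint A₁ A₂ := by
      refine Set.disjoint_of_subset (t₂ := Tᶜ) Set.inter_subset_right ?_ disjoint_compl_right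
      rw [hA₂def, Set.diff_eq]; exact Set.inter_subset_right
    calc (ν.withDensity (fun x => f x - 1) + s) A
        = ∫⁻ x in A, (f x - 1) ∂ν + s A := by
          rw [Measure.add_apply, withDensity_apply _ hA]
      _ ≤ τ A₁ + τ A₂ := by rw [key1]; exact add_le_add key2 key3
      _ = τ (A₁ ∪ A₂) := (measure_union hdisj hA₂m).symm
      _ ≤ τ A := measure_mono (by
          rw [hA₁def, hA₂def]
          exact Set.union_subset (Set.inter_subset_left.trans Set.inter_subset_left) Set.diff_subset)

lemma measure_le_sub_add (μ ν : Measure α) [IsFiniteMeasure μ] [IsFiniteMeasure ν] :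
    μ ≤ (μ - ν) + ν := by
  rw [measure_sub_eq]
  set f := μ.rnDeriv ν with hfdef
  have hf : Measurable f := Measure.measurable_rnDeriv μ ν
  calc μ = ν.withDensity f + μ.singularPart ν := (Measure.rnDeriv_add_singularPart μ ν).symm
  _ ≤ ν.withDensity (fun x => (f x - 1) + 1) + μ.singularPart ν :=
      add_le_add_left (withDensity_mono (Filter.Eventually.of_forall fun x => le_tsub_add)) _
  _ = (ν.withDensity (fun x => f x - 1) + ν.withDensity (fun _ => 1)) + μ.singularPart ν := by
      rw [← withDensity_add_left (show Measurable (fun x => f x - 1) from hf.sub measurable_const)]; rfl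
  _ = (ν.withDensity (fun x => f x - 1) + μ.singularPart ν) + ν := by
      rw [show ν.withDensity (fun _ : α => (1:ℝ≥0∞)) = ν from withDensity_one]; abel

lemma aux_min_add (x : ℝ≥0∞) : x ≤ min 1 x + (x - 1) := by
  rcases le_total x 1 with h | h
  · rw [min_eq_right h]; exact le_self_add
  · rw [min_eq_left h, add_comm]; exact le_tsub_add

lemma keyA (ρ σ : Measure α) [IsFiniteMeasure ρ] [IsFiniteMeasure σ] :
    ρ Set.univ ≤ (σ.withDensity (fun x => min 1 (ρ.rnDeriv σ x))) Set.univ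
      + (ρ - σ) Set.univ := by
  set f := ρ.rnDeriv σ with hfdef
  have hf : Measurable f := Measure.measurable_rnDeriv ρ σ
  have hwd : ∀ g : α → ℝ≥0∞, (σ.withDensity g) Set.univ = ∫⁻ x, g x ∂σ := by
    intro g
    rw [withDensity_apply _ MeasurableSet.univ, Measure.restrict_univ]
  have h1 : ρ Set.univ = ∫⁻ x, f x ∂σ + ρ.singularPart σ Set.univ := by
    conv_lhs => rw [← Measure.rnDeriv_add_singularPart ρ σ]
    rw [Measure.add_apply, hwd]
  have h2 : (ρ - σ) Set.univ = ∫⁻ x, (f x - 1) ∂σ + ρ.singularPart σ Set.univ := by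
    rw [measure_sub_eq, Measure.add_apply, hwd]
  have h3 : ∫⁻ x, f x ∂σ ≤ ∫⁻ x, min 1 (f x) ∂σ + ∫⁻ x, (f x - 1) ∂σ := by
    rw [← lintegral_add_left (measurable_const.min hf)]
    exact lintegral_mono fun x => aux_min_add (f x)
  rw [h1, h2, hwd]
  calc ∫⁻ x, f x ∂σ + ρ.singularPart σ Set.univ
      ≤ (∫⁻ x, min 1 (f x) ∂σ + ∫⁻ x, (f x - 1) ∂σ) + ρ.singularPart σ Set.univ :=
        add_le_add_left h3 _
    _ = ∫⁻ x, min 1 (f x) ∂σ + (∫⁻ x, (f x - 1) ∂σ + ρ.singularPart σ Set.univ) := by abel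

lemma keyB (ρ σ : Measure α) [IsFiniteMeasure ρ] [IsFiniteMeasure σ] :
    σ Set.univ ≤ (σ.withDensity (fun x => min 1 (ρ.rnDeriv σ x))) Set.univ
      + (σ - ρ) Set.univ := by
  set f := ρ.rnDeriv σ with hfdef
  have hf : Measurable f := Measure.measurable_rnDeriv ρ σ
  obtain ⟨T, hTm, hsT, hσTc⟩ := Measure.mutuallySingular_singularPart ρ σ
  set P : Set α := {x | f x < 1} with hPdef
  have hP : MeasurableSet P := measurableSet_lt hf measurable_const
  set B : Set α := P ∩ T with hBdef
  have hσB : σ B = σ P := by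
    rw [hBdef, ← Set.diff_compl, measure_diff_null hσTc]
  have hρB : ρ B ≤ ∫⁻ x in P, f x ∂σ := by
    conv_lhs => rw [← Measure.rnDeriv_add_singularPart ρ σ]
    rw [Measure.add_apply, withDensity_apply _ (hP.inter hTm)]
    have h1 : ρ.singularPart σ B ≤ ρ.singularPart σ T :=
      measure_mono Set.inter_subset_right
    have h2 : ∫⁻ x in B, f x ∂σ ≤ ∫⁻ x in P, f x ∂σ :=
      lintegral_mono_set Set.inter_subset_left
    calc ∫⁻ x in B, f x ∂σ + ρ.singularPart σ B
        ≤ ∫⁻ x in P, f x ∂σ + 0 := add_le_add h2 (by rw [← hsT] at *; exact h1.trans_eq (by rw [hsT]))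
      _ = ∫⁻ x in P, f x ∂σ := add_zero _
  have hsub : σ P ≤ (σ - ρ) Set.univ + ∫⁻ x in P, f x ∂σ := by
    calc σ P = σ B := hσB.symm
    _ ≤ ((σ - ρ) + ρ) B := measure_le_sub_add σ ρ B
    _ = (σ - ρ) B + ρ B := by rw [Measure.add_apply]
    _ ≤ (σ - ρ) Set.univ + ∫⁻ x in P, f x ∂σ :=
        add_le_add (measure_mono (Set.subset_univ B)) hρB
  have hwd : (σ.withDensity (fun x => min 1 (f x))) Set.univ
      = ∫⁻ x in P, f x ∂σ + σ Pᶜ := by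
    rw [withDensity_apply _ MeasurableSet.univ, Measure.restrict_univ,
      ← lintegral_add_compl (fun x => min 1 (f x)) hP]
    congr 1
    · refine setLIntegral_congr_fun hP (fun x hx => ?_)
      exact min_eq_right (le_of_lt hx)
    · have : ∫⁻ x in Pᶜ, min 1 (f x) ∂σ = ∫⁻ x in Pᶜ, 1 ∂σ := by
        refine setLIntegral_congr_fun hP.compl (fun x hx => ?_)
        exact min_eq_left (not_lt.1 hx)
      rw [this, setLIntegral_one]
  calc σ Set.univ = σ P + σ Pᶜ := (measure_add_measure_compl hP).symm
  _ ≤ ((σ - ρ) Set.univ + ∫⁻ x in P, f x ∂σ) + σ Pᶜ := add_le_add_left hsub _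
  _ = (σ.withDensity (fun x => min 1 (f x))) Set.univ + (σ - ρ) Set.univ := by
      rw [hwd]; abel

lemma sub_le_sub_add_sub (μ ν₁ ν' : Measure α) [IsFiniteMeasure μ] [IsFiniteMeasure ν₁]
    [IsFiniteMeasure ν'] (h : ν₁ ≤ ν') : μ - ν₁ ≤ (μ - ν') + (ν' - ν₁) := by
  apply Measure.sub_le_of_le_add
  calc μ ≤ (μ - ν') + ν' := measure_le_sub_add μ ν'
  _ = (μ - ν') + ((ν' - ν₁) + ν₁) := by rw [Measure.sub_add_cancel_of_le h]
  _ = ((μ - ν') + (ν' - ν₁)) + ν₁ := by rw [add_assoc]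

lemma sub_mono_left (ν₁ ν' ρ : Measure α) [IsFiniteMeasure ν'] [IsFiniteMeasure ρ]
    (h : ν₁ ≤ ν') : ν₁ - ρ ≤ ν' - ρ :=
  Measure.sub_le_of_le_add (h.trans (measure_le_sub_add ν' ρ))

lemma fst_withDensity (ρ : Measure (α × β)) {g : α → ℝ≥0∞} (hg : Measurable g) :
    (ρ.withDensity (fun z => g z.1)).fst = ρ.fst.withDensity g := by
  ext A hA
  rw [Measure.fst_apply hA, withDensity_apply _ (measurable_fst hA),
    withDensity_apply _ hA]
  unfold Measure.fst
  rw [setLIntegral_map hA hg measurable_fst]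

lemma snd_withDensity (ρ : Measure (α × β)) {g : β → ℝ≥0∞} (hg : Measurable g) :
    (ρ.withDensity (fun z => g z.2)).snd = ρ.snd.withDensity g := by
  ext A hA
  rw [Measure.snd_apply hA, withDensity_apply _ (measurable_snd hA),
    withDensity_apply _ hA]
  unfold Measure.snd
  rw [setLIntegral_map hA hg measurable_snd]

lemma withDensity_le_self (ρ : Measure α) {g : α → ℝ≥0∞} (hg : ∀ x, g x ≤ 1) :
    ρ.withDensity g ≤ ρ := by
  refine Measure.le_iff.2 fun A hA => ?_
  rw [withDensity_apply _ hA]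
  calc ∫⁻ x in A, g x ∂ρ ≤ ∫⁻ x in A, 1 ∂ρ := lintegral_mono fun x => hg x
  _ = ρ A := setLIntegral_one A

lemma measure_sub_zero' (μ : Measure α) [IsFiniteMeasure μ] : μ - (0 : Measure α) = μ := by
  refine le_antisymm Measure.sub_le ?_
  have h := measure_le_sub_add μ (0 : Measure α)
  simpa using h

end DomHelpers

section DomGW2

variable {X : Type*} [MeasurableSpace X] [MetricSpace X]

variable {X : Type*} [MeasurableSpace X] [MetricSpace X]

lemma tvE_eq_of_le {μ ρ : Measure X} [IsFiniteMeasure μ] (h : ρ ≤ μ) :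
    tvE μ ρ = μ Set.univ - ρ Set.univ := by
  haveI : IsFiniteMeasure ρ := isFiniteMeasure_of_le μ h
  rw [tvE, Measure.sub_eq_zero_of_le h, Measure.sub_apply MeasurableSet.univ h]
  simp

lemma tvE_ne_top (μ ν : Measure X) [IsFiniteMeasure μ] [IsFiniteMeasure ν] :
    tvE μ ν ≠ ∞ := by
  have h1 : (μ - ν) Set.univ ≤ μ Set.univ := Measure.sub_le Set.univ
  have h2 : (ν - μ) Set.univ ≤ ν Set.univ := Measure.sub_le Set.univ
  exact ne_top_of_le_ne_top (by finiteness)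
    (add_le_add h1 h2)

lemma tvE_zero_right (μ : Measure X) [IsFiniteMeasure μ] : tvE μ 0 = μ Set.univ := by
  rw [tvE, measure_sub_zero']
  simp

lemma memMp_one_of {ρ : Measure X} [IsFiniteMeasure ρ] (x₀ : X)
    (h : ∫⁻ x, edist x x₀ ∂ρ ≠ ∞) : MemMp 1 ρ := by
  refine ⟨inferInstance, fun y => ?_⟩
  simp only [ENNReal.rpow_one]
  have hle : ∫⁻ x, edist x y ∂ρ ≤ ∫⁻ x, (edist x x₀ + edist x₀ y) ∂ρ :=
    lintegral_mono fun x => edist_triangle x x₀ y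
  rw [lintegral_add_right _ measurable_const, lintegral_const] at hle
  refine ne_top_of_le_ne_top ?_ hle
  exact ENNReal.add_ne_top.2 ⟨h, ENNReal.mul_ne_top (edist_ne_top x₀ y) (measure_ne_top ρ _)⟩

lemma memMp_zero : MemMp 1 (0 : Measure X) := by
  refine ⟨inferInstance, fun y => by simp⟩

lemma WpE_zero_zero : WpE 1 (0 : Measure X) (0 : Measure X) = 0 := by
  rw [WpE]
  simp

/-- Upper bound for `WpE` through the plan itself. -/
lemma WpE_fst_snd_le (γ' : Measure (X × X)) [IsFiniteMeasure γ'] :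
    WpE 1 γ'.fst γ'.snd ≤ ∫⁻ z, edist z.1 z.2 ∂γ' := by
  rw [WpE, one_div_one, ENNReal.rpow_one, Measure.fst_univ]
  by_cases hm : γ' Set.univ = 0
  · rw [hm, zero_mul]; exact zero_le
  · set m := γ' Set.univ with hmdef
    have hmt : m ≠ ∞ := measure_ne_top γ' _
    have hprob : IsProbabilityMeasure (m⁻¹ • γ') :=
      ⟨by rw [Measure.smul_apply, smul_eq_mul, ENNReal.inv_mul_cancel hm hmt]⟩
    have hcoup : IsCoupling γ'.fst γ'.snd (m⁻¹ • γ') := by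
      refine ⟨hprob, fun A hA => ?_, fun B hB => ?_⟩
      · rw [Measure.fst_univ, Measure.smul_apply, smul_eq_mul, ← mul_assoc,
          ENNReal.mul_inv_cancel hm hmt, one_mul, Measure.fst_apply hA, Set.prod_univ]
      · rw [Measure.snd_univ, Measure.smul_apply, smul_eq_mul, ← mul_assoc,
          ENNReal.mul_inv_cancel hm hmt, one_mul, Measure.snd_apply hB, Set.univ_prod]
    calc m * ⨅ π : {π : Measure (X × X) // IsCoupling γ'.fst γ'.snd π},
          ∫⁻ z, edist z.1 z.2 ^ (1:ℝ) ∂(π.1)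
        ≤ m * ∫⁻ z, edist z.1 z.2 ^ (1:ℝ) ∂(m⁻¹ • γ') :=
          mul_le_mul_right (iInf_le _ (⟨m⁻¹ • γ', hcoup⟩ : {π : Measure (X × X) // IsCoupling γ'.fst γ'.snd π})) m
      _ = ∫⁻ z, edist z.1 z.2 ∂γ' := by
          simp only [ENNReal.rpow_one, lintegral_smul_measure, smul_eq_mul]
          rw [← mul_assoc, ENNReal.mul_inv_cancel hm hmt, one_mul]

lemma genWE_ne_top (a b : ℝ) (μ₁ μ₂ : Measure X) [IsFiniteMeasure μ₁] [IsFiniteMeasure μ₂] :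
    genWE a b 1 μ₁ μ₂ ≠ ∞ := by
  have hle : genWE a b 1 μ₁ μ₂ ≤
      ENNReal.ofReal a * tvE μ₁ 0 + ENNReal.ofReal a * tvE μ₂ 0 +
        ENNReal.ofReal b * WpE 1 (0 : Measure X) (0 : Measure X) := by
    refine iInf_le_of_le 0 (iInf_le_of_le 0 ?_)
    exact iInf_le_of_le memMp_zero (iInf_le_of_le memMp_zero (iInf_le_of_le rfl le_rfl))
  refine ne_top_of_le_ne_top ?_ hle
  rw [WpE_zero_zero, tvE_zero_right, tvE_zero_right, mul_zero, add_zero]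
  exact ENNReal.add_ne_top.2 ⟨ENNReal.mul_ne_top ofReal_ne_top (measure_ne_top μ₁ _),
    ENNReal.mul_ne_top ofReal_ne_top (measure_ne_top μ₂ _)⟩

end DomGW2

section DomStepA

variable {X : Type*} [MeasurableSpace X] [MetricSpace X] [BorelSpace X]
  [TopologicalSpace.SeparableSpace X]

lemma stepA (a b : ℝ)
    (μ₁ μ₂ : Measure X) [IsFiniteMeasure μ₁] [IsFiniteMeasure μ₂]
    (γ : Measure (X × X)) [IsFiniteMeasure γ] (hI : (∫⁻ z, edist z.1 z.2 ∂γ) ≠ ∞)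
    (h1 : γ.fst ≤ μ₁) (h2 : γ.snd ≤ μ₂) :
    genWE a b 1 μ₁ μ₂ ≤ ENNReal.ofReal a * tvE μ₁ γ.fst + ENNReal.ofReal a * tvE μ₂ γ.snd
      + ENNReal.ofReal b * ∫⁻ z, edist z.1 z.2 ∂γ := by
  rcases isEmpty_or_nonempty X with hX | hX
  · have hle : genWE a b 1 μ₁ μ₂ ≤
        ENNReal.ofReal a * tvE μ₁ 0 + ENNReal.ofReal a * tvE μ₂ 0 +
          ENNReal.ofReal b * WpE 1 (0 : Measure X) (0 : Measure X) := by
      refine iInf_le_of_le 0 (iInf_le_of_le 0 ?_)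
      exact iInf_le_of_le memMp_zero (iInf_le_of_le memMp_zero (iInf_le_of_le rfl le_rfl))
    rw [WpE_zero_zero, tvE_zero_right, tvE_zero_right] at hle
    have huniv : (Set.univ : Set X) = ∅ := Set.univ_eq_empty_iff.2 hX
    rw [huniv] at hle
    simp only [measure_empty, mul_zero, add_zero, zero_add] at hle
    exact hle.trans zero_le
  · haveI : SecondCountableTopology X := UniformSpace.secondCountable_of_separable X
    obtain ⟨x₀⟩ := hX
    set I := ∫⁻ z, edist z.1 z.2 ∂γ with hIdef
    have hd1 : Measurable fun z : X × X => edist z.1 x₀ := measurable_fst.edist measurable_const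
    have hd2 : Measurable fun z : X × X => edist z.1 z.2 := measurable_fst.edist measurable_snd
    have hd2' : Measurable fun z : X × X => edist z.2 z.1 := measurable_snd.edist measurable_fst
    set E : ℕ → Set (X × X) := fun n => {z | edist z.1 x₀ ≤ (n : ℝ≥0∞)} with hEdef
    have hEm : ∀ n, MeasurableSet (E n) := fun n => measurableSet_le hd1 measurable_const
    have key : ∀ n : ℕ, genWE a b 1 μ₁ μ₂ ≤
        ENNReal.ofReal a * (μ₁ Set.univ - γ (E n)) +
          ENNReal.ofReal a * (μ₂ Set.univ - γ (E n)) + ENNReal.ofReal b * I := by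
      intro n
      set γn := γ.restrict (E n) with hγn
      have hγle : γn ≤ γ := Measure.restrict_le_self
      haveI : IsFiniteMeasure γn := isFiniteMeasure_of_le γ hγle
      have hγnuniv : γn Set.univ = γ (E n) := by rw [hγn, Measure.restrict_apply_univ]
      have hcostn : ∫⁻ z, edist z.1 z.2 ∂γn ≤ I := lintegral_mono' hγle le_rfl
      have hb1 : ∫⁻ z, edist z.1 x₀ ∂γn ≤ (n : ℝ≥0∞) * γ (E n) := by
        rw [hγn]
        calc ∫⁻ z in E n, edist z.1 x₀ ∂γ ≤ ∫⁻ _ in E n, (n : ℝ≥0∞) ∂γ :=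
            setLIntegral_mono' (hEm n) (fun z hz => hz)
        _ = (n : ℝ≥0∞) * γ (E n) := setLIntegral_const _ _
      have hnγ : (n : ℝ≥0∞) * γ (E n) ≠ ∞ :=
        ENNReal.mul_ne_top (ENNReal.natCast_ne_top n) (measure_ne_top γ _)
      have hmom1 : ∫⁻ x, edist x x₀ ∂γn.fst ≠ ∞ := by
        have heq : ∫⁻ x, edist x x₀ ∂γn.fst = ∫⁻ z, edist z.1 x₀ ∂γn := by
          rw [Measure.fst, lintegral_map (measurable_id'.edist measurable_const) measurable_fst]
        rw [heq]
        exact ne_top_of_le_ne_top hnγ hb1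
      have hmom2 : ∫⁻ x, edist x x₀ ∂γn.snd ≠ ∞ := by
        have heq : ∫⁻ x, edist x x₀ ∂γn.snd = ∫⁻ z, edist z.2 x₀ ∂γn := by
          rw [Measure.snd, lintegral_map (measurable_id'.edist measurable_const) measurable_snd]
        rw [heq]
        have htri : ∫⁻ z, edist z.2 x₀ ∂γn ≤ ∫⁻ z, (edist z.2 z.1 + edist z.1 x₀) ∂γn :=
          lintegral_mono fun z => edist_triangle _ _ _
        rw [lintegral_add_left hd2'] at htri
        have hcomm : ∫⁻ z, edist z.2 z.1 ∂γn = ∫⁻ z, edist z.1 z.2 ∂γn :=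
          lintegral_congr fun z => edist_comm _ _
        refine ne_top_of_le_ne_top ?_ htri
        rw [hcomm]
        exact ENNReal.add_ne_top.2 ⟨ne_top_of_le_ne_top hI hcostn, ne_top_of_le_ne_top hnγ hb1⟩
      have hM1 : MemMp 1 γn.fst := memMp_one_of x₀ hmom1
      have hM2 : MemMp 1 γn.snd := memMp_one_of x₀ hmom2
      have hmass : γn.fst Set.univ = γn.snd Set.univ := by
        rw [Measure.fst_univ, Measure.snd_univ]
      have hval : genWE a b 1 μ₁ μ₂ ≤
          ENNReal.ofReal a * tvE μ₁ γn.fst + ENNReal.ofReal a * tvE μ₂ γn.snd +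
            ENNReal.ofReal b * WpE 1 γn.fst γn.snd := by
        refine iInf_le_of_le γn.fst (iInf_le_of_le γn.snd ?_)
        exact iInf_le_of_le hM1 (iInf_le_of_le hM2 (iInf_le_of_le hmass le_rfl))
      refine hval.trans ?_
      have ht1 : tvE μ₁ γn.fst = μ₁ Set.univ - γ (E n) := by
        rw [tvE_eq_of_le ((Measure.fst_mono hγle).trans h1), Measure.fst_univ, hγnuniv]
      have ht2 : tvE μ₂ γn.snd = μ₂ Set.univ - γ (E n) := by
        rw [tvE_eq_of_le ((Measure.snd_mono hγle).trans h2), Measure.snd_univ, hγnuniv]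
      rw [ht1, ht2]
      exact add_le_add le_rfl (mul_le_mul_right ((WpE_fst_snd_le γn).trans hcostn) _)
    have hmono : Monotone E := by
      intro i j hij z hz
      simp only [hEdef, Set.mem_setOf_eq] at hz ⊢
      exact hz.trans (Nat.cast_le.mpr hij)
    have hunion : ⋃ n, E n = Set.univ := by
      ext z
      simp only [Set.mem_iUnion, Set.mem_univ, iff_true]
      obtain ⟨n, hn⟩ := ENNReal.exists_nat_gt (edist_ne_top z.1 x₀)
      exact ⟨n, hn.le⟩
    have htend : Filter.Tendsto (fun n => γ (E n)) Filter.atTop (nhds (γ Set.univ)) := by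
      have := tendsto_measure_iUnion_atTop (μ := γ) hmono
      rwa [hunion] at this
    have htends : Filter.Tendsto (fun n =>
        ENNReal.ofReal a * (μ₁ Set.univ - γ (E n)) +
          ENNReal.ofReal a * (μ₂ Set.univ - γ (E n)) + ENNReal.ofReal b * I)
        Filter.atTop (nhds (ENNReal.ofReal a * (μ₁ Set.univ - γ Set.univ) +
          ENNReal.ofReal a * (μ₂ Set.univ - γ Set.univ) + ENNReal.ofReal b * I)) := by
      have hs1 : Filter.Tendsto (fun n => μ₁ Set.univ - γ (E n)) Filter.atTop
          (nhds (μ₁ Set.univ - γ Set.univ)) :=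
        ENNReal.Tendsto.sub tendsto_const_nhds htend (Or.inl (measure_ne_top μ₁ _))
      have hs2 : Filter.Tendsto (fun n => μ₂ Set.univ - γ (E n)) Filter.atTop
          (nhds (μ₂ Set.univ - γ Set.univ)) :=
        ENNReal.Tendsto.sub tendsto_const_nhds htend (Or.inl (measure_ne_top μ₂ _))
      exact ((ENNReal.Tendsto.const_mul hs1 (Or.inr ofReal_ne_top)).add
        (ENNReal.Tendsto.const_mul hs2 (Or.inr ofReal_ne_top))).add tendsto_const_nhds
    have hfinal := ge_of_tendsto' htends key
    refine hfinal.trans ?_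
    have ht1 : tvE μ₁ γ.fst = μ₁ Set.univ - γ Set.univ := by
      rw [tvE_eq_of_le h1, Measure.fst_univ]
    have ht2 : tvE μ₂ γ.snd = μ₂ Set.univ - γ Set.univ := by
      rw [tvE_eq_of_le h2, Measure.snd_univ]
    rw [ht1, ht2]

end DomStepA

section DomStepB

variable {X : Type*} [MeasurableSpace X] [MetricSpace X]

lemma stepB (μ₁ μ₂ μ' ν' : Measure X) [IsFiniteMeasure μ₁] [IsFiniteMeasure μ₂]
    [IsFiniteMeasure μ'] [IsFiniteMeasure ν'] (hmass : μ' Set.univ = ν' Set.univ)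
    (π : Measure (X × X)) (hc : IsCoupling μ' ν' π)
    (hF : ∫⁻ z, edist z.1 z.2 ∂π ≠ ∞) :
    ∃ γ : Measure (X × X), IsFiniteMeasure γ ∧ (∫⁻ z, edist z.1 z.2 ∂γ) ≠ ∞ ∧
      γ.fst ≤ μ₁ ∧ γ.snd ≤ μ₂ ∧
      (μ₁ Set.univ - γ.fst Set.univ) + (μ₂ Set.univ - γ.snd Set.univ)
        ≤ tvE μ₁ μ' + tvE μ₂ ν' ∧
      ∫⁻ z, edist z.1 z.2 ∂γ ≤ μ' Set.univ * ∫⁻ z, edist z.1 z.2 ∂π := by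
  by_cases hm0 : μ' Set.univ = 0
  · have hμ'0 : μ' = 0 := Measure.measure_univ_eq_zero.mp hm0
    have hν'0 : ν' = 0 := Measure.measure_univ_eq_zero.mp (by rw [← hmass]; exact hm0)
    refine ⟨0, inferInstance, by simp, by rw [Measure.fst_zero]; exact Measure.zero_le μ₁, by rw [Measure.snd_zero]; exact Measure.zero_le μ₂, ?_, by simp⟩
    rw [hμ'0, hν'0, tvE_zero_right, tvE_zero_right, Measure.fst_zero, Measure.snd_zero]
    simp
  · set m := μ' Set.univ with hmdef
    have hmt : m ≠ ∞ := measure_ne_top μ' _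
    haveI hprob : IsProbabilityMeasure π := hc.1
    set γt : Measure (X × X) := m • π with hγt
    haveI : IsFiniteMeasure γt := by
      constructor
      rw [hγt, Measure.smul_apply, smul_eq_mul, measure_univ, mul_one]
      exact hmt.lt_top
    have hfst : γt.fst = μ' := by
      ext A hA
      rw [Measure.fst_apply hA, hγt, Measure.smul_apply, smul_eq_mul, ← Set.prod_univ]
      exact hc.2.1 A hA
    have hsnd : γt.snd = ν' := by
      ext B hB
      rw [Measure.snd_apply hB, hγt, Measure.smul_apply, smul_eq_mul, ← Set.univ_prod]
      have h := hc.2.2 B hB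
      rwa [← hmass] at h
    have hγtuniv : γt Set.univ = m := by
      rw [hγt, Measure.smul_apply, smul_eq_mul, measure_univ, mul_one]
    have hcost_t : ∫⁻ z, edist z.1 z.2 ∂γt = m * ∫⁻ z, edist z.1 z.2 ∂π := by
      rw [hγt, lintegral_smul_measure, smul_eq_mul]
    set f₁ := μ₁.rnDeriv μ' with hf₁
    have hf₁m : Measurable f₁ := Measure.measurable_rnDeriv μ₁ μ'
    set g₁ : X → ℝ≥0∞ := fun x => min 1 (f₁ x) with hg₁
    have hg₁m : Measurable g₁ := measurable_const.min hf₁m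
    set γ1 := γt.withDensity (fun z => g₁ z.1) with hγ1
    have hγ1le : γ1 ≤ γt := withDensity_le_self γt (fun x => min_le_left _ _)
    haveI : IsFiniteMeasure γ1 := isFiniteMeasure_of_le γt hγ1le
    have hγ1fst : γ1.fst = μ'.withDensity g₁ := by rw [hγ1, fst_withDensity γt hg₁m, hfst]
    have hγ1fst_le : γ1.fst ≤ μ₁ := by
      rw [hγ1fst]
      exact (withDensity_mono (Filter.Eventually.of_forall fun x => min_le_right _ _)).trans
        (Measure.withDensity_rnDeriv_le μ₁ μ')
    set ν₁ := γ1.snd with hν₁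
    haveI : IsFiniteMeasure ν₁ := by rw [hν₁]; infer_instance
    have hν₁le : ν₁ ≤ ν' := by rw [hν₁, ← hsnd]; exact Measure.snd_mono hγ1le
    set f₂ := μ₂.rnDeriv ν₁ with hf₂
    have hf₂m : Measurable f₂ := Measure.measurable_rnDeriv μ₂ ν₁
    set g₂ : X → ℝ≥0∞ := fun x => min 1 (f₂ x) with hg₂
    have hg₂m : Measurable g₂ := measurable_const.min hf₂m
    set γ := γ1.withDensity (fun z => g₂ z.2) with hγ
    have hγle : γ ≤ γ1 := withDensity_le_self γ1 (fun x => min_le_left _ _)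
    haveI : IsFiniteMeasure γ := isFiniteMeasure_of_le γ1 hγle
    have hγsnd : γ.snd = ν₁.withDensity g₂ := by rw [hγ, snd_withDensity γ1 hg₂m, hν₁]
    have hγsnd_le : γ.snd ≤ μ₂ := by
      rw [hγsnd]
      exact (withDensity_mono (Filter.Eventually.of_forall fun x => min_le_right _ _)).trans
        (Measure.withDensity_rnDeriv_le μ₂ ν₁)
    have hγfst_le : γ.fst ≤ μ₁ := (Measure.fst_mono hγle).trans hγ1fst_le
    have hcost : ∫⁻ z, edist z.1 z.2 ∂γ ≤ m * ∫⁻ z, edist z.1 z.2 ∂π := by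
      calc ∫⁻ z, edist z.1 z.2 ∂γ ≤ ∫⁻ z, edist z.1 z.2 ∂γ1 := lintegral_mono' hγle le_rfl
      _ ≤ ∫⁻ z, edist z.1 z.2 ∂γt := lintegral_mono' hγ1le le_rfl
      _ = m * ∫⁻ z, edist z.1 z.2 ∂π := hcost_t
    set P := μ₁ Set.univ with hP
    set Q := μ₂ Set.univ with hQ
    set α := γ1 Set.univ with hα
    set β := γ Set.univ with hβ
    have hαν₁ : ν₁ Set.univ = α := Measure.snd_univ
    have hβsnd : γ.snd Set.univ = β := Measure.snd_univ
    have hβfst : γ.fst Set.univ = β := Measure.fst_univ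
    have hβα : β ≤ α := (Measure.le_iff'.1 hγle) Set.univ
    have hαm : α ≤ m := by rw [← hγtuniv]; exact (Measure.le_iff'.1 hγ1le) Set.univ
    have hwd1univ : (μ'.withDensity (fun x => min 1 (μ₁.rnDeriv μ' x))) Set.univ = α := by
      rw [show (fun x => min 1 (μ₁.rnDeriv μ' x)) = g₁ from rfl, ← hγ1fst, Measure.fst_univ]
    have hwd2univ : (ν₁.withDensity (fun x => min 1 (μ₂.rnDeriv ν₁ x))) Set.univ = β := by
      rw [show (fun x => min 1 (μ₂.rnDeriv ν₁ x)) = g₂ from rfl, ← hγsnd, Measure.snd_univ]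
    have hF1 : P ≤ α + (μ₁ - μ') Set.univ := by
      have h := keyA μ₁ μ'; rwa [hwd1univ] at h
    have hF2 : m ≤ α + (μ' - μ₁) Set.univ := by
      have h := keyB μ₁ μ'; rwa [hwd1univ] at h
    have hF3 : Q ≤ β + (μ₂ - ν₁) Set.univ := by
      have h := keyA μ₂ ν₁; rwa [hwd2univ] at h
    have hF4 : α ≤ β + (ν₁ - μ₂) Set.univ := by
      have h := keyB μ₂ ν₁; rwa [hwd2univ, hαν₁] at h
    have hF5 : (μ₂ - ν₁) Set.univ ≤ (μ₂ - ν') Set.univ + (m - α) := by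
      have h := (Measure.le_iff'.1 (sub_le_sub_add_sub μ₂ ν₁ ν' hν₁le)) Set.univ
      rw [Measure.add_apply] at h
      have h3 : (ν' - ν₁) Set.univ = m - α := by
        rw [Measure.sub_apply MeasurableSet.univ hν₁le, hαν₁, ← hmass]
      rwa [h3] at h
    have hF6 : (ν₁ - μ₂) Set.univ ≤ (ν' - μ₂) Set.univ :=
      (Measure.le_iff'.1 (sub_mono_left ν₁ ν' μ₂ hν₁le)) Set.univ
    have hβP : β ≤ P := by rw [← hβfst, hP]; exact (Measure.le_iff'.1 hγfst_le) Set.univ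
    have hβQ : β ≤ Q := by rw [← hβsnd, hQ]; exact (Measure.le_iff'.1 hγsnd_le) Set.univ
    have htv : (P - β) + (Q - β) ≤ tvE μ₁ μ' + tvE μ₂ ν' := by
      rw [tvE, tvE]
      have hne : ∀ (ρ σ : Measure X) [IsFiniteMeasure ρ], (ρ - σ) Set.univ ≠ ∞ :=
        fun ρ σ _ => measure_ne_top _ _
      refine (ENNReal.toReal_le_toReal ?_ ?_).mp ?_
      · exact ENNReal.add_ne_top.2 ⟨ne_top_of_le_ne_top (measure_ne_top μ₁ _) tsub_le_self,
          ne_top_of_le_ne_top (measure_ne_top μ₂ _) tsub_le_self⟩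
      · exact ENNReal.add_ne_top.2 ⟨ENNReal.add_ne_top.2 ⟨hne _ _, hne _ _⟩,
          ENNReal.add_ne_top.2 ⟨hne _ _, hne _ _⟩⟩
      · have hPt : P ≠ ∞ := measure_ne_top _ _
        have hQt : Q ≠ ∞ := measure_ne_top _ _
        have hαt : α ≠ ∞ := measure_ne_top _ _
        have hβt : β ≠ ∞ := measure_ne_top _ _
        rw [ENNReal.toReal_add (ne_top_of_le_ne_top hPt tsub_le_self)
            (ne_top_of_le_ne_top hQt tsub_le_self),
          ENNReal.toReal_add (ENNReal.add_ne_top.2 ⟨hne _ _, hne _ _⟩)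
            (ENNReal.add_ne_top.2 ⟨hne _ _, hne _ _⟩),
          ENNReal.toReal_add (hne _ _) (hne _ _), ENNReal.toReal_add (hne _ _) (hne _ _),
          ENNReal.toReal_sub_of_le hβP hPt, ENNReal.toReal_sub_of_le hβQ hQt]
        have hF1' := ENNReal.toReal_mono (ENNReal.add_ne_top.2 ⟨hαt, hne _ _⟩) hF1
        rw [ENNReal.toReal_add hαt (hne _ _)] at hF1'
        have hF2' := ENNReal.toReal_mono (ENNReal.add_ne_top.2 ⟨hαt, hne _ _⟩) hF2
        rw [ENNReal.toReal_add hαt (hne _ _)] at hF2'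
        have hF3' := ENNReal.toReal_mono (ENNReal.add_ne_top.2 ⟨hβt, hne _ _⟩) hF3
        rw [ENNReal.toReal_add hβt (hne _ _)] at hF3'
        have hF4' := ENNReal.toReal_mono (ENNReal.add_ne_top.2 ⟨hβt, hne _ _⟩) hF4
        rw [ENNReal.toReal_add hβt (hne _ _)] at hF4'
        have hF5' := ENNReal.toReal_mono
          (ENNReal.add_ne_top.2 ⟨hne _ _, ne_top_of_le_ne_top hmt tsub_le_self⟩) hF5
        rw [ENNReal.toReal_add (hne _ _) (ne_top_of_le_ne_top hmt tsub_le_self),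
          ENNReal.toReal_sub_of_le hαm hmt] at hF5'
        have hF6' := ENNReal.toReal_mono (hne _ _) hF6
        have hmm := ENNReal.toReal_mono hmt hαm
        have hββ := ENNReal.toReal_mono hαt hβα
        linarith
    exact ⟨γ, inferInstance, ne_top_of_le_ne_top (ENNReal.mul_ne_top hmt hF) hcost,
      hγfst_le, hγsnd_le, by rw [hβfst, hβsnd]; exact htv, hcost⟩

end DomStepB

/-- **Formulation of `W₁^{a,b}` via dominated plans** (Remark 5.4).
`W₁^{a,b}(μ₁,μ₂) = inf_{γ ∈ M^≤(μ₁,μ₂)} { a|μ₁-γ₁| + a|μ₂-γ₂| + b ∫ d dγ }`, where the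
infimum runs over finite nonnegative Borel measures `γ` on `X × X` with `∫ d dγ < ∞`
whose marginals satisfy `γ₁ ≤ μ₁` and `γ₂ ≤ μ₂`. -/
theorem genW_eq_sInf_dominated_plans
    {X : Type*} [MeasurableSpace X] [MetricSpace X] [BorelSpace X]
    [TopologicalSpace.SeparableSpace X] [CompleteSpace X]
    (a b : ℝ) (ha : 0 < a) (hb : 0 < b)
    (μ₁ μ₂ : Measure X) [IsFiniteMeasure μ₁] [IsFiniteMeasure μ₂] :
    genW a b 1 μ₁ μ₂ =
      sInf {r : ℝ | ∃ γ : Measure (X × X), IsFiniteMeasure γ ∧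
        (∫⁻ z, edist z.1 z.2 ∂γ) ≠ ∞ ∧ γ.fst ≤ μ₁ ∧ γ.snd ≤ μ₂ ∧
        r = a * tv μ₁ γ.fst + a * tv μ₂ γ.snd +
          b * (∫⁻ z, edist z.1 z.2 ∂γ).toReal} := by
  set S := {r : ℝ | ∃ γ : Measure (X × X), IsFiniteMeasure γ ∧
        (∫⁻ z, edist z.1 z.2 ∂γ) ≠ ∞ ∧ γ.fst ≤ μ₁ ∧ γ.snd ≤ μ₂ ∧
        r = a * tv μ₁ γ.fst + a * tv μ₂ γ.snd +
          b * (∫⁻ z, edist z.1 z.2 ∂γ).toReal} with hSdef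
  have hlb : ∀ r ∈ S, (0:ℝ) ≤ r := by
    rintro r ⟨γ, hfin, hI, h1, h2, rfl⟩
    have h01 : (0:ℝ) ≤ tv μ₁ γ.fst := ENNReal.toReal_nonneg
    have h02 : (0:ℝ) ≤ tv μ₂ γ.snd := ENNReal.toReal_nonneg
    have h03 : (0:ℝ) ≤ (∫⁻ z, edist z.1 z.2 ∂γ).toReal := ENNReal.toReal_nonneg
    nlinarith
  have hbdd : BddBelow S := ⟨0, fun r hr => hlb r hr⟩
  have hmem0 : a * (μ₁ Set.univ).toReal + a * (μ₂ Set.univ).toReal ∈ S := by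
    refine ⟨0, inferInstance, by simp, ?_, ?_, ?_⟩
    · rw [Measure.fst_zero]; exact Measure.zero_le μ₁
    · rw [Measure.snd_zero]; exact Measure.zero_le μ₂
    · simp [tv, Measure.fst_zero, Measure.snd_zero, tvE_zero_right]
  have hSne : S.Nonempty := ⟨_, hmem0⟩
  have hWne : genWE a b 1 μ₁ μ₂ ≠ ∞ := genWE_ne_top a b μ₁ μ₂
  apply le_antisymm
  · refine le_csInf hSne ?_
    rintro r ⟨γ, hfin, hI, h1, h2, rfl⟩
    haveI := hfin
    have hA := stepA a b μ₁ μ₂ γ hI h1 h2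
    have hne1 : ENNReal.ofReal a * tvE μ₁ γ.fst ≠ ∞ :=
      ENNReal.mul_ne_top ENNReal.ofReal_ne_top (tvE_ne_top _ _)
    have hne2 : ENNReal.ofReal a * tvE μ₂ γ.snd ≠ ∞ :=
      ENNReal.mul_ne_top ENNReal.ofReal_ne_top (tvE_ne_top _ _)
    have hne3 : ENNReal.ofReal b * ∫⁻ z, edist z.1 z.2 ∂γ ≠ ∞ :=
      ENNReal.mul_ne_top ENNReal.ofReal_ne_top hI
    have hmono := ENNReal.toReal_mono
      (ENNReal.add_ne_top.2 ⟨ENNReal.add_ne_top.2 ⟨hne1, hne2⟩, hne3⟩) hA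
    rw [ENNReal.toReal_add (ENNReal.add_ne_top.2 ⟨hne1, hne2⟩) hne3,
      ENNReal.toReal_add hne1 hne2, ENNReal.toReal_mul, ENNReal.toReal_mul,
      ENNReal.toReal_mul, ENNReal.toReal_ofReal ha.le, ENNReal.toReal_ofReal hb.le] at hmono
    simpa [genW, tv] using hmono
  · have key : ENNReal.ofReal (sInf S) ≤ genWE a b 1 μ₁ μ₂ := by
      refine le_iInf fun μ' => le_iInf fun ν' => le_iInf fun hM1 => le_iInf fun hM2 =>
        le_iInf fun hmass => ?_
      haveI := hM1.1; haveI := hM2.1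
      by_cases hm0 : μ' Set.univ = 0
      · have hμ'0 : μ' = 0 := Measure.measure_univ_eq_zero.mp hm0
        have hν'0 : ν' = 0 := Measure.measure_univ_eq_zero.mp (by rw [← hmass]; exact hm0)
        rw [hμ'0, hν'0, tvE_zero_right, tvE_zero_right, WpE_zero_zero, mul_zero, add_zero]
        refine (ENNReal.ofReal_le_ofReal (csInf_le hbdd hmem0)).trans ?_
        rw [ENNReal.ofReal_add (mul_nonneg ha.le ENNReal.toReal_nonneg)
            (mul_nonneg ha.le ENNReal.toReal_nonneg),
          ENNReal.ofReal_mul ha.le, ENNReal.ofReal_mul ha.le,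
          ENNReal.ofReal_toReal (measure_ne_top μ₁ _), ENNReal.ofReal_toReal (measure_ne_top μ₂ _)]
      · rw [WpE, one_div_one, ENNReal.rpow_one]
        simp only [ENNReal.rpow_one]
        set m := μ' Set.univ with hm
        have hmt : m ≠ ∞ := measure_ne_top μ' _
        have hνm : ν' Set.univ = m := hmass.symm
        haveI hp1 : IsProbabilityMeasure (m⁻¹ • μ') :=
          ⟨by rw [Measure.smul_apply, smul_eq_mul, ENNReal.inv_mul_cancel hm0 hmt]⟩
        haveI hp2 : IsProbabilityMeasure (m⁻¹ • ν') :=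
          ⟨by rw [Measure.smul_apply, smul_eq_mul, hνm, ENNReal.inv_mul_cancel hm0 hmt]⟩
        have hcoup0 : IsCoupling μ' ν' ((m⁻¹ • μ').prod (m⁻¹ • ν')) := by
          refine ⟨inferInstance, fun A hA => ?_, fun B hB => ?_⟩
          · rw [Measure.prod_prod, measure_univ (μ := m⁻¹ • ν'), mul_one, Measure.smul_apply,
              smul_eq_mul, ← mul_assoc, ENNReal.mul_inv_cancel hm0 hmt, one_mul]
          · rw [Measure.prod_prod, measure_univ (μ := m⁻¹ • μ'), one_mul, Measure.smul_apply,
              smul_eq_mul, hνm, ← mul_assoc, ENNReal.mul_inv_cancel hm0 hmt, one_mul]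
        haveI hne : Nonempty {π : Measure (X × X) // IsCoupling μ' ν' π} :=
          ⟨⟨(m⁻¹ • μ').prod (m⁻¹ • ν'), hcoup0⟩⟩
        have hper : ∀ π : {π : Measure (X × X) // IsCoupling μ' ν' π},
            ENNReal.ofReal (sInf S) ≤
              ENNReal.ofReal a * tvE μ₁ μ' + ENNReal.ofReal a * tvE μ₂ ν' +
                ENNReal.ofReal b * (m * ∫⁻ z, edist z.1 z.2 ∂π.1) := by
          rintro ⟨π, hπ⟩
          by_cases hFπ : ∫⁻ z, edist z.1 z.2 ∂π = ∞
          · simp only [hFπ, ENNReal.mul_top hm0,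
              ENNReal.mul_top ((ENNReal.ofReal_pos.2 hb).ne'), add_top]
            exact le_top
          · obtain ⟨γ, hfin, hIγ, h1, h2, htv, hcost⟩ := stepB μ₁ μ₂ μ' ν' hmass π hπ hFπ
            haveI := hfin
            have hmem : a * tv μ₁ γ.fst + a * tv μ₂ γ.snd +
                b * (∫⁻ z, edist z.1 z.2 ∂γ).toReal ∈ S := ⟨γ, hfin, hIγ, h1, h2, rfl⟩
            refine (ENNReal.ofReal_le_ofReal (csInf_le hbdd hmem)).trans ?_
            have htv1 : (0:ℝ) ≤ a * tv μ₁ γ.fst := mul_nonneg ha.le ENNReal.toReal_nonneg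
            have htv2 : (0:ℝ) ≤ a * tv μ₂ γ.snd := mul_nonneg ha.le ENNReal.toReal_nonneg
            have htv3 : (0:ℝ) ≤ b * (∫⁻ z, edist z.1 z.2 ∂γ).toReal :=
              mul_nonneg hb.le ENNReal.toReal_nonneg
            rw [ENNReal.ofReal_add (add_nonneg htv1 htv2) htv3,
              ENNReal.ofReal_add htv1 htv2, ENNReal.ofReal_mul ha.le, ENNReal.ofReal_mul ha.le,
              ENNReal.ofReal_mul hb.le, tv, tv,
              ENNReal.ofReal_toReal (tvE_ne_top _ _), ENNReal.ofReal_toReal (tvE_ne_top _ _),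
              ENNReal.ofReal_toReal hIγ]
            refine add_le_add ?_ (mul_le_mul_right hcost _)
            rw [← mul_add, ← mul_add]
            refine mul_le_mul_right ?_ _
            rw [tvE_eq_of_le h1, tvE_eq_of_le h2]
            exact htv
        have hinf := le_iInf hper
        refine hinf.trans (le_of_eq ?_)
        rw [ENNReal.mul_iInf_of_ne hm0 hmt,
          ENNReal.mul_iInf_of_ne ((ENNReal.ofReal_pos.2 hb).ne') ENNReal.ofReal_ne_top,
          ENNReal.add_iInf]
    have h0 : (0:ℝ) ≤ sInf S := le_csInf hSne fun r hr => hlb r hr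
    have hfin := ENNReal.toReal_mono hWne key
    rw [ENNReal.toReal_ofReal h0] at hfin
    simpa [genW] using hfin
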